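/- Let I' be an instance of Hospitals/Residents with Ties constructed from an SPA-ST instance I by the cloning construction (where for each lecturer l_k with sum of project capacities exceeding d_k, f_k = (Σ_{p_j∈P_k} c_j) − d_k dummy residents are created, each dummy resident's preference list is a single tie containing all hospitals corresponding to projects of l_k, and each such hospital has a tie of all these dummy residents prepended to its preference list). Then in every stable matching of I', every dummy resident is assigned. -/

import Mathlib

open scoped Classical
open Finset

/-- An instance of the Student-Project Allocation problem with lecturer
preferences over students, with ties (SPA-ST).  Preferences are encoded by
rank functions: a lower rank means more preferred; equal ranks encode ties. -/
structure SPAST (S P L : Type) where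
  /-- the lecturer offering each project -/
  lec : P → L
  /-- project capacities -/
  cap : P → ℕ
  /-- lecturer capacities -/
  dcap : L → ℕ
  /-- `acc s p` iff student `s` finds project `p` acceptable -/
  acc : S → P → Prop
  /-- student rank function (lower is better); meaningful on acceptable projects -/
  sRank : S → P → ℕ
  /-- lecturer rank function over students (lower is better) -/
  lRank : L → S → ℕ

variable {S P L : Type}

/-- students assigned to a project in `M` -/
noncomputable def projAssignees [Fintype S] (M : S → Option P) (p : P) : Finset S :=
  Finset.univ.filter (fun s => M s = some p)

/-- students assigned to some project of lecturer `k` in `M` -/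
noncomputable def lecAssignees [Fintype S] (I : SPAST S P L) (M : S → Option P) (k : L) :
    Finset S :=
  Finset.univ.filter (fun s => ∃ p, M s = some p ∧ I.lec p = k)

def IsMatching [Fintype S] (I : SPAST S P L) (M : S → Option P) : Prop :=
  (∀ s p, M s = some p → I.acc s p) ∧
  (∀ p, (projAssignees M p).card ≤ I.cap p) ∧
  (∀ k, (lecAssignees I M k).card ≤ I.dcap k)

def ProjFull [Fintype S] (I : SPAST S P L) (M : S → Option P) (p : P) : Prop :=
  (projAssignees M p).card = I.cap p

def LecFull [Fintype S] (I : SPAST S P L) (M : S → Option P) (k : L) : Prop :=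
  (lecAssignees I M k).card = I.dcap k

/-- `s` finds `p` acceptable and is unassigned or strictly prefers `p` to `M(s)`. -/
def WantsToMove (I : SPAST S P L) (M : S → Option P) (s : S) (p : P) : Prop :=
  I.acc s p ∧ (M s = none ∨ ∃ p', M s = some p' ∧ I.sRank s p < I.sRank s p')

/-- `(s, p)` is a blocking pair of `M`. -/
def Blocks [Fintype S] (I : SPAST S P L) (M : S → Option P) (s : S) (p : P) : Prop :=
  WantsToMove I M s p ∧
  ( (¬ ProjFull I M p ∧ ¬ LecFull I M (I.lec p)) ∨
    (¬ ProjFull I M p ∧ LecFull I M (I.lec p) ∧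
      (s ∈ lecAssignees I M (I.lec p) ∨
       ∃ s' ∈ lecAssignees I M (I.lec p), I.lRank (I.lec p) s < I.lRank (I.lec p) s')) ∨
    (ProjFull I M p ∧
       ∃ s' ∈ projAssignees M p, I.lRank (I.lec p) s < I.lRank (I.lec p) s') )

def Stable [Fintype S] (I : SPAST S P L) (M : S → Option P) : Prop :=
  IsMatching I M ∧ ∀ s p, ¬ Blocks I M s p

/-- the number of assigned agents in a matching -/
noncomputable def msize {A B : Type} [Fintype A] (M : A → Option B) : ℕ :=
  (Finset.univ.filter (fun a => (M a).isSome)).card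

/-- An instance of the Hospitals/Residents problem with Ties (HRT), encoded by
rank functions (lower rank = more preferred; equal ranks are ties). -/
structure HRT (R H : Type) where
  /-- hospital capacities -/
  cap : H → ℕ
  /-- `acc r h` iff `(r, h)` is an acceptable pair -/
  acc : R → H → Prop
  /-- resident rank function over hospitals -/
  rRank : R → H → ℕ
  /-- hospital rank function over residents -/
  hRank : H → R → ℕ

/-- residents assigned to a hospital -/
noncomputable def hospAssignees {R H : Type} [Fintype R] (M : R → Option H) (h : H) :
    Finset R :=
  Finset.univ.filter (fun r => M r = some h)

def HIsMatching {R H : Type} [Fintype R] (J : HRT R H) (M : R → Option H) : Prop :=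
  (∀ r h, M r = some h → J.acc r h) ∧ (∀ h, (hospAssignees M h).card ≤ J.cap h)

/-- `(r, h)` is a blocking pair of `M` in HRT -/
def HBlocks {R H : Type} [Fintype R] (J : HRT R H) (M : R → Option H) (r : R) (h : H) :
    Prop :=
  J.acc r h ∧
  (M r = none ∨ ∃ h', M r = some h' ∧ J.rRank r h < J.rRank r h') ∧
  ((hospAssignees M h).card < J.cap h ∨
    ∃ r' ∈ hospAssignees M h, J.hRank h r < J.hRank h r')

def HStable {R H : Type} [Fintype R] (J : HRT R H) (M : R → Option H) : Prop :=
  HIsMatching J M ∧ ∀ r h, ¬ HBlocks J M r h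

/-- `f_k`: the number of dummy residents created for lecturer `k`, namely
`max 0 ((Σ_{p ∈ P_k} c_p) - d_k)` (truncated ℕ-subtraction). -/
noncomputable def fk [Fintype P] (I : SPAST S P L) (k : L) : ℕ :=
  (∑ p ∈ Finset.univ.filter (fun p => I.lec p = k), I.cap p) - I.dcap k

/-- the dummy residents of the cloned instance -/
abbrev Dummy [Fintype P] (I : SPAST S P L) : Type := Σ k : L, Fin (fk I k)

/-- The cloning construction from SPA-ST to HRT.  Residents are students plus
dummies; hospitals are the projects with their capacities.  A student-resident
inherits the student's preferences; a dummy of lecturer `k` finds exactly the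
hospitals of `k` acceptable, all in a single first-place tie (rank `0`), and
each hospital of `k` places all dummies of `k` in a first-place tie (rank `0`)
ahead of the real residents, whose lecturer-ranks are shifted up by one. -/
noncomputable def clone [Fintype P] (I : SPAST S P L) : HRT (S ⊕ Dummy I) P where
  cap := I.cap
  acc := fun r h =>
    match r with
    | Sum.inl s => I.acc s h
    | Sum.inr d => I.lec h = d.1
  rRank := fun r h =>
    match r with
    | Sum.inl s => I.sRank s h
    | Sum.inr _ => 0
  hRank := fun h r =>
    match r with
    | Sum.inl s => I.lRank (I.lec h) s + 1
    | Sum.inr _ => 0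

/-- In the HRT instance obtained from an SPA-ST instance by the
cloning construction, every dummy resident is assigned in every stable matching. -/
theorem stmt1 [Fintype S] [Fintype P] [Fintype L] (I : SPAST S P L)
    (M : S ⊕ Dummy I → Option P) (hM : HStable (clone I) M) :
    ∀ d : Dummy I, (M (Sum.inr d)).isSome := by
  rintro ⟨k, i⟩
  by_contra hds
  rw [Option.not_isSome_iff_eq_none] at hds
  obtain ⟨⟨haccM, hcapM⟩, hnb⟩ := hM
  classical
  set Pk := Finset.univ.filter (fun p => I.lec p = k) with hPk
  have key : ∀ p ∈ Pk, (hospAssignees M p).card = I.cap p ∧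
      ∀ r ∈ hospAssignees M p, ∃ j : Fin (fk I k), r = Sum.inr ⟨k, j⟩ ∧ j ≠ i := by
    intro p hp
    rw [hPk, Finset.mem_filter] at hp
    have hblock : ¬ HBlocks (clone I) M (Sum.inr ⟨k, i⟩) p := hnb _ p
    have hC : ¬ ((hospAssignees M p).card < (clone I).cap p ∨
        ∃ r' ∈ hospAssignees M p,
          (clone I).hRank p (Sum.inr ⟨k, i⟩) < (clone I).hRank p r') := by
      intro hC
      exact hblock ⟨hp.2, Or.inl hds, hC⟩
    push_neg at hC
    obtain ⟨hge, hrk⟩ := hC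
    refine ⟨le_antisymm (hcapM p) hge, ?_⟩
    intro r hr
    have hrk' := hrk r hr
    have hmem : M r = some p := (Finset.mem_filter.mp hr).2
    rcases r with s | ⟨k', j'⟩
    · exfalso
      simp [clone] at hrk'
    · have hk' : I.lec p = k' := haccM _ p hmem
      have hkk : k' = k := hk'.symm.trans hp.2
      subst hkk
      refine ⟨j', rfl, ?_⟩
      intro hji
      subst hji
      rw [hds] at hmem
      exact Option.some_ne_none p hmem.symm
  set T := Pk.biUnion (fun p => hospAssignees M p) with hT
  have hdisj : ∀ p ∈ Pk, ∀ q ∈ Pk, p ≠ q →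
      Disjoint (hospAssignees M p) (hospAssignees M q) := by
    intro p _ q _ hpq
    refine Finset.disjoint_left.mpr ?_
    intro r hrp hrq
    have h1 : M r = some p := (Finset.mem_filter.mp hrp).2
    have h2 : M r = some q := (Finset.mem_filter.mp hrq).2
    exact hpq (Option.some.inj (h1.symm.trans h2))
  have hcardT : T.card = ∑ p ∈ Pk, I.cap p := by
    rw [hT, Finset.card_biUnion hdisj]
    exact Finset.sum_congr rfl (fun p hp => (key p hp).1)
  have hfk : 0 < fk I k := i.pos
  set g : (S ⊕ Dummy I) → Fin (fk I k) := fun r =>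
    if h : ∃ j : Fin (fk I k), r = Sum.inr ⟨k, j⟩ then h.choose else i with hg
  have hgspec : ∀ r, ∀ j : Fin (fk I k), r = Sum.inr ⟨k, j⟩ → g r = j := by
    intro r j hrj
    have hex : ∃ j : Fin (fk I k), r = Sum.inr ⟨k, j⟩ := ⟨j, hrj⟩
    simp only [hg, dif_pos hex]
    have hsp := hrj.symm.trans hex.choose_spec
    simpa using hsp.symm
  have hinj : Set.InjOn g T := by
    intro r1 h1 r2 h2 hgeq
    obtain ⟨p1, hp1, hr1⟩ := Finset.mem_biUnion.mp h1
    obtain ⟨p2, hp2, hr2⟩ := Finset.mem_biUnion.mp h2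
    obtain ⟨j1, e1, _⟩ := (key p1 hp1).2 r1 hr1
    obtain ⟨j2, e2, _⟩ := (key p2 hp2).2 r2 hr2
    rw [hgspec r1 j1 e1, hgspec r2 j2 e2] at hgeq
    rw [e1, e2, hgeq]
  have hmaps : ∀ r ∈ T, g r ∈ Finset.univ.erase i := by
    intro r hr
    obtain ⟨p, hp, hrp⟩ := Finset.mem_biUnion.mp hr
    obtain ⟨j, e, hne⟩ := (key p hp).2 r hrp
    rw [hgspec r j e]
    exact Finset.mem_erase.mpr ⟨hne, Finset.mem_univ _⟩
  have hle : T.card ≤ (Finset.univ.erase i).card :=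
    Finset.card_le_card_of_injOn g hmaps hinj
  rw [Finset.card_erase_of_mem (Finset.mem_univ i), Finset.card_univ,
    Fintype.card_fin] at hle
  have hfkle : fk I k ≤ ∑ p ∈ Pk, I.cap p := by
    rw [hPk]; unfold fk; exact Nat.sub_le _ _
  omega
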